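/- The degenerate Eulerian polynomials satisfy the recurrence A_{0,λ}(x) = 1 and, for n ≥ 1, A_{n,λ}(x) = ∑_{i=0}^{n-1} binom(n, i) A_{i,λ}(x) (1)_{n-i,-λ} (x-1)^{n-i-1}. -/

import Mathlib

open Finset PowerSeries

/-- Degenerate falling factorial `(x)_{n,λ} = x(x-λ)⋯(x-(n-1)λ)`. -/
noncomputable def dfall (l x : ℝ) (n : ℕ) : ℝ := ∏ i ∈ Finset.range n, (x - i * l)

/-- Degenerate Eulerian number `A_λ(n,k) = ∑_{i=0}^k C(n+1,i)(-1)^i (k-i+1)_{n,λ}`. -/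
noncomputable def degEulerianNum (l : ℝ) (n k : ℕ) : ℝ :=
  ∑ i ∈ Finset.range (k+1), ((n+1).choose i : ℝ) * (-1)^i * dfall l ((k : ℝ) - i + 1) n

/-- Degenerate Eulerian polynomial `A_{n,λ}(x) = ∑_{k=0}^n A_λ(n,k) x^k`. -/
noncomputable def degEulerianPoly (l : ℝ) (n : ℕ) (x : ℝ) : ℝ :=
  ∑ k ∈ Finset.range (n+1), degEulerianNum l n k * x^k

/-- Generalized binomial coefficient `binom(y,m) = y(y-1)⋯(y-m+1)/m!`. -/
noncomputable def genBinom (y : ℝ) (m : ℕ) : ℝ :=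
  (∏ i ∈ Finset.range m, (y - i)) / m.factorial

/-- Degenerate exponential `e_λ^x(t) = ∑_k (x)_{k,λ} t^k/k!` as a formal power series. -/
noncomputable def degExp (l x : ℝ) : PowerSeries ℝ :=
  PowerSeries.mk fun k => dfall l x k / k.factorial

/-- Degenerate Stirling number of the second kind (explicit formula). -/
noncomputable def degStirling2 (l : ℝ) (n k : ℕ) : ℝ :=
  (-1)^k / k.factorial * ∑ j ∈ Finset.range (k+1), (-1)^j * (k.choose j : ℝ) * dfall l j n

/- ### Auxiliary lemmas -/

lemma dfall_zero (l x : ℝ) : dfall l x 0 = 1 := by simp [dfall]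

lemma dfall_succ (l x : ℝ) (n : ℕ) : dfall l x (n+1) = dfall l x n * (x - n*l) := by
  simp [dfall, Finset.prod_range_succ]

lemma dfall_zero_arg (l : ℝ) (n : ℕ) (hn : 1 ≤ n) : dfall l 0 n = 0 := by
  apply Finset.prod_eq_zero (Finset.mem_range.2 hn)
  simp

lemma dfall_neg_one (l : ℝ) (m : ℕ) : dfall l (-1) m = (-1)^m * dfall (-l) 1 m := by
  unfold dfall
  rw [show ((-1:ℝ))^m = ∏ _i ∈ Finset.range m, (-1:ℝ) by simp, ← Finset.prod_mul_distrib]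
  exact Finset.prod_congr rfl fun i _ => by ring

lemma dfall_vandermonde (l : ℝ) (n : ℕ) : ∀ x y : ℝ,
    dfall l (x + y) n
      = ∑ i ∈ Finset.range (n+1), (n.choose i : ℝ) * dfall l x i * dfall l y (n - i) := by
  induction n with
  | zero => intro x y; simp [dfall]
  | succ n ih =>
    intro x y
    rw [dfall_succ, ih x y, Finset.sum_mul]
    have hsplit : ∀ i ∈ Finset.range (n+1),
        (n.choose i : ℝ) * dfall l x i * dfall l y (n - i) * (x + y - n*l)
          = (n.choose i : ℝ) * dfall l x (i+1) * dfall l y (n - i)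
            + (n.choose i : ℝ) * dfall l x i * dfall l y (n - i + 1) := by
      intro i hi
      rw [Finset.mem_range] at hi
      rw [dfall_succ, dfall_succ]
      have hc : ((n - i : ℕ) : ℝ) = (n : ℝ) - i := by
        rw [Nat.cast_sub (by omega)]
      rw [hc]; ring
    rw [Finset.sum_congr rfl hsplit, Finset.sum_add_distrib]
    conv_rhs => rw [Finset.sum_range_succ']
    have hsum : ∀ i ∈ Finset.range (n+1),
        ((n+1).choose (i+1) : ℝ) * dfall l x (i+1) * dfall l y (n+1-(i+1))
          = (n.choose i : ℝ) * dfall l x (i+1) * dfall l y (n-i)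
            + (n.choose (i+1) : ℝ) * dfall l x (i+1) * dfall l y (n-i) := by
      intro i hi
      have : (n+1).choose (i+1) = n.choose i + n.choose (i+1) := Nat.choose_succ_succ n i
      rw [this, Nat.succ_sub_succ]
      push_cast; ring
    rw [Finset.sum_congr rfl hsum, Finset.sum_add_distrib]
    have hB : ∑ i ∈ Finset.range (n+1),
        (n.choose (i+1) : ℝ) * dfall l x (i+1) * dfall l y (n-i)
        = ∑ i ∈ Finset.range n, (n.choose (i+1) : ℝ) * dfall l x (i+1) * dfall l y (n-i) := by
      rw [Finset.sum_range_succ, Nat.choose_succ_self]; simp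
    have hS2 : ∑ i ∈ Finset.range (n+1),
        (n.choose i : ℝ) * dfall l x i * dfall l y (n-i+1)
        = (∑ i ∈ Finset.range n, (n.choose (i+1) : ℝ) * dfall l x (i+1) * dfall l y (n-i))
          + (n.choose 0 : ℝ) * dfall l x 0 * dfall l y (n+1) := by
      rw [Finset.sum_range_succ']
      congr 1
      · exact Finset.sum_congr rfl fun i hi => by
          rw [Finset.mem_range] at hi
          congr 2
          omega
    rw [hB, hS2]
    simp [dfall]
    ring

lemma diff_vanish : ∀ (d : ℕ) (p : Polynomial ℝ), p.degree < d → ∀ y : ℝ,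
    ∑ i ∈ Finset.range (d+1), (-1:ℝ)^i * (d.choose i : ℝ) * p.eval (y - i) = 0 := by
  intro d
  induction d with
  | zero =>
    intro p hp y
    have hp0 : p = 0 := by
      rw [← Polynomial.degree_eq_bot]
      exact Nat.WithBot.lt_zero_iff.mp (by exact_mod_cast hp)
    simp [hp0]
  | succ d ih =>
    intro p hp y
    set q : Polynomial ℝ := p - p.comp (Polynomial.X - Polynomial.C 1) with hqdef
    have heval : ∀ t : ℝ, q.eval t = p.eval t - p.eval (t - 1) := by
      intro t; simp [hqdef, Polynomial.eval_comp]
    have hq : q.degree < d := by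
      by_cases hp0 : p = 0
      · have : q = 0 := by simp [hqdef, hp0]
        rw [this, Polynomial.degree_zero]
        exact WithBot.bot_lt_coe d
      · have hlc := Polynomial.leadingCoeff_comp
          (p := p) (q := Polynomial.X - Polynomial.C 1)
          (by rw [Polynomial.natDegree_X_sub_C]; exact one_ne_zero)
        rw [Polynomial.Monic.leadingCoeff (Polynomial.monic_X_sub_C (1:ℝ)), one_pow,
          mul_one] at hlc
        have hC0 : p.comp (Polynomial.X - Polynomial.C 1) ≠ 0 := by
          intro h
          apply hp0
          rw [← Polynomial.leadingCoeff_eq_zero] at h ⊢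
          rw [← hlc]; exact h
        have hnd : (p.comp (Polynomial.X - Polynomial.C 1)).natDegree = p.natDegree := by
          rw [Polynomial.natDegree_comp, Polynomial.natDegree_X_sub_C, mul_one]
        have hdeg : (p.comp (Polynomial.X - Polynomial.C 1)).degree = p.degree := by
          rw [Polynomial.degree_eq_natDegree hC0, Polynomial.degree_eq_natDegree hp0, hnd]
        have h1 : q.degree < p.degree := Polynomial.degree_sub_lt hdeg.symm hp0 hlc.symm
        have hdn := Polynomial.degree_eq_natDegree hp0
        rw [hdn] at hp
        have hlt : p.natDegree < d + 1 := by exact_mod_cast hp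
        have h2 : p.degree ≤ (d : WithBot ℕ) := by
          rw [hdn]; exact_mod_cast Nat.lt_succ_iff.mp hlt
        exact lt_of_lt_of_le h1 h2
    have hIH := ih q hq y
    have key : ∑ i ∈ Finset.range (d+1+1), (-1:ℝ)^i * ((d+1).choose i : ℝ) * p.eval (y - i)
        = ∑ i ∈ Finset.range (d+1), (-1:ℝ)^i * (d.choose i : ℝ) * q.eval (y - i) := by
      have hR : ∀ i ∈ Finset.range (d+1),
          (-1:ℝ)^i * (d.choose i : ℝ) * q.eval (y - i)
            = (-1:ℝ)^i * (d.choose i : ℝ) * p.eval (y - i)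
              + (-1:ℝ)^(i+1) * (d.choose i : ℝ) * p.eval (y - ((i+1:ℕ):ℝ)) := by
        intro i _
        rw [heval]
        push_cast
        ring_nf
      rw [Finset.sum_congr rfl hR, Finset.sum_add_distrib]
      rw [Finset.sum_range_succ'
        (fun i => (-1:ℝ)^i * (((d+1)).choose i : ℝ) * p.eval (y - i)) (d+1)]
      rw [Finset.sum_range_succ'
        (fun i => (-1:ℝ)^i * ((d).choose i : ℝ) * p.eval (y - i)) d]
      have hext : ∑ i ∈ Finset.range d,
            (-1:ℝ)^(i+1) * ((d).choose (i+1) : ℝ) * p.eval (y - ((i+1:ℕ):ℝ))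
          = ∑ i ∈ Finset.range (d+1),
            (-1:ℝ)^(i+1) * ((d).choose (i+1) : ℝ) * p.eval (y - ((i+1:ℕ):ℝ)) := by
        rw [Finset.sum_range_succ, Nat.choose_succ_self]
        simp
      rw [hext]
      have hL : ∀ i ∈ Finset.range (d+1),
          (-1:ℝ)^(i+1) * (((d+1)).choose (i+1) : ℝ) * p.eval (y - ((i+1:ℕ):ℝ))
            = ((-1:ℝ)^(i+1) * ((d).choose (i+1) : ℝ) * p.eval (y - ((i+1:ℕ):ℝ))
              + (-1:ℝ)^(i+1) * ((d).choose i : ℝ) * p.eval (y - ((i+1:ℕ):ℝ))) := by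
        intro i _
        rw [Nat.choose_succ_succ]
        push_cast
        ring
      rw [Finset.sum_congr rfl hL, Finset.sum_add_distrib]
      simp
      ring
    rw [key, hIH]

lemma coeff_one_sub_pow (m i : ℕ) :
    ((1 - Polynomial.X : Polynomial ℝ)^m).coeff i = (-1)^i * (m.choose i : ℝ) := by
  have h : (1 - Polynomial.X : Polynomial ℝ)^m
      = ∑ k ∈ Finset.range (m+1), Polynomial.C ((-1:ℝ)^k * (m.choose k : ℝ))
          * Polynomial.X ^ k := by
    rw [sub_eq_add_neg, add_comm, add_pow]
    apply Finset.sum_congr rfl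
    intro k _
    rw [neg_pow]
    simp [Polynomial.C_mul, mul_comm, mul_assoc, mul_left_comm]
  rw [h, Polynomial.finset_sum_coeff]
  simp only [Polynomial.coeff_C_mul, Polynomial.coeff_X_pow]
  rw [Finset.sum_eq_single i]
  · simp
  · intro b _ hb; simp [Ne.symm hb]
  · intro h'
    rw [Finset.mem_range, not_lt] at h'
    simp [Nat.choose_eq_zero_of_lt (show m < i by omega)]

/-- The polynomial whose evaluation is `degEulerianPoly`. -/
noncomputable def Pn (l : ℝ) (n : ℕ) : Polynomial ℝ :=
  ∑ k ∈ Finset.range (n+1), Polynomial.C (degEulerianNum l n k) * Polynomial.X ^ k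

lemma Pn_coeff (l : ℝ) (n m : ℕ) :
    (Pn l n).coeff m = if m ≤ n then degEulerianNum l n m else 0 := by
  unfold Pn
  rw [Polynomial.finset_sum_coeff]
  simp only [Polynomial.coeff_C_mul, Polynomial.coeff_X_pow]
  by_cases h : m ≤ n
  · rw [Finset.sum_eq_single m]
    · simp [h]
    · intro b _ hb; simp [Ne.symm hb]
    · intro hm; exact absurd (Finset.mem_range.2 (by omega)) hm
  · rw [if_neg h]
    apply Finset.sum_eq_zero
    intro k hk
    rw [Finset.mem_range] at hk
    simp [show m ≠ k by omega]

lemma Pn_eval (l : ℝ) (n : ℕ) (x : ℝ) : (Pn l n).eval x = degEulerianPoly l n x := by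
  unfold Pn degEulerianPoly
  simp [Polynomial.eval_finset_sum]

lemma key_prod (l : ℝ) (n : ℕ) :
    (((1 - Polynomial.X : Polynomial ℝ)^(n+1) : Polynomial ℝ) : PowerSeries ℝ)
      * PowerSeries.mk (fun j => dfall l ((j : ℝ)+1) n)
      = ((Pn l n : Polynomial ℝ) : PowerSeries ℝ) := by
  ext m
  rw [PowerSeries.coeff_mul, Finset.Nat.sum_antidiagonal_eq_sum_range_succ_mk]
  simp only [Polynomial.coeff_coe, PowerSeries.coeff_mk, coeff_one_sub_pow]
  rw [Pn_coeff]
  by_cases h : m ≤ n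
  · rw [if_pos h]
    unfold degEulerianNum
    apply Finset.sum_congr rfl
    intro i hi
    rw [Finset.mem_range] at hi
    have hc : ((m - i : ℕ) : ℝ) = (m : ℝ) - i := Nat.cast_sub (by omega)
    rw [hc]
    ring
  · rw [if_neg h]
    set p : Polynomial ℝ := ∏ k ∈ Finset.range n, (Polynomial.X + Polynomial.C (1 - k*l))
      with hpdef
    have hevalp : ∀ t : ℝ, p.eval t = dfall l (t+1) n := by
      intro t
      rw [hpdef, Polynomial.eval_prod]
      unfold dfall
      apply Finset.prod_congr rfl
      intro k _
      simp
      ring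
    have hdeg : p.degree < ((n+1 : ℕ) : WithBot ℕ) := by
      have h1 : p.degree = n := by
        have hsum : ∑ i ∈ Finset.range n, (Polynomial.X + Polynomial.C (1 - (i:ℝ)*l)).degree
            = ∑ _i ∈ Finset.range n, (1 : WithBot ℕ) :=
          Finset.sum_congr rfl (fun i _ => Polynomial.degree_X_add_C _)
        rw [hpdef, Polynomial.degree_prod, hsum]
        simp [Finset.sum_const, Nat.smul_one_eq_cast]
      rw [h1]
      exact_mod_cast Nat.lt_succ_self n
    have hv := diff_vanish (n+1) p hdeg (m : ℝ)
    have h1 : ∀ i ∈ Finset.range (m+1),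
        (-1:ℝ)^i * ((n+1).choose i : ℝ) * dfall l (((m - i : ℕ) : ℝ) + 1) n
          = (-1:ℝ)^i * ((n+1).choose i : ℝ) * p.eval ((m:ℝ) - i) := by
      intro i hi
      rw [Finset.mem_range] at hi
      rw [hevalp, Nat.cast_sub (by omega)]
    rw [Finset.sum_congr rfl h1]
    rw [← Finset.sum_subset (Finset.range_subset_range.2 (show n+1+1 ≤ m+1 by omega))
      (fun i _ hi => by
        rw [Finset.mem_range, not_lt] at hi
        simp [Nat.choose_eq_zero_of_lt (show n+1 < i by omega)])]
    exact hv

lemma dfall_diff (l : ℝ) (n : ℕ) (hn : 1 ≤ n) (t : ℝ) :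
    dfall l (t+1) n - dfall l t n
      = ∑ i ∈ Finset.range n,
        (n.choose i : ℝ) * (-1:ℝ)^(n-i-1) * dfall (-l) 1 (n-i) * dfall l (t+1) i := by
  have hv := dfall_vandermonde l n (t+1) (-1)
  rw [show (t+1) + (-1) = t by ring, Finset.sum_range_succ] at hv
  simp only [Nat.sub_self, dfall_zero, Nat.choose_self, Nat.cast_one, one_mul, mul_one] at hv
  have hterm : ∀ i ∈ Finset.range n,
      (n.choose i : ℝ) * dfall l (t+1) i * dfall l (-1) (n-i)
        = -((n.choose i : ℝ) * (-1:ℝ)^(n-i-1) * dfall (-l) 1 (n-i) * dfall l (t+1) i) := by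
    intro i hi
    rw [Finset.mem_range] at hi
    rw [dfall_neg_one]
    obtain ⟨m, hm⟩ : ∃ m, n - i = m+1 := ⟨n-i-1, by omega⟩
    rw [hm]
    simp only [Nat.add_sub_cancel, pow_succ]
    ring
  rw [Finset.sum_congr rfl hterm, Finset.sum_neg_distrib] at hv
  linarith

lemma step_ps (l : ℝ) (n : ℕ) (hn : 1 ≤ n) :
    (1 - PowerSeries.X : PowerSeries ℝ) * PowerSeries.mk (fun j => dfall l ((j:ℝ)+1) n)
      = ∑ i ∈ Finset.range n,
          PowerSeries.C ((n.choose i : ℝ) * (-1:ℝ)^(n-i-1) * dfall (-l) 1 (n-i))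
            * PowerSeries.mk (fun j => dfall l ((j:ℝ)+1) i) := by
  ext j
  rw [sub_mul, one_mul, map_sub, map_sum]
  simp only [PowerSeries.coeff_C_mul, PowerSeries.coeff_mk]
  cases j with
  | zero =>
    rw [PowerSeries.coeff_zero_X_mul, sub_zero]
    have h := dfall_diff l n hn 0
    rw [dfall_zero_arg l n hn, sub_zero] at h
    rw [Nat.cast_zero, h]
  | succ j =>
    rw [PowerSeries.coeff_succ_X_mul, PowerSeries.coeff_mk]
    have hcast : ((j+1:ℕ):ℝ) = (j:ℝ) + 1 := by push_cast; ring
    rw [hcast, dfall_diff l n hn ((j:ℝ)+1)]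

lemma coe_one_sub : ((1 - Polynomial.X : Polynomial ℝ) : PowerSeries ℝ)
    = 1 - PowerSeries.X := by
  rw [← Polynomial.coeToPowerSeries.ringHom_apply, map_sub]
  simp

lemma Pn_rec (l : ℝ) (n : ℕ) (hn : 1 ≤ n) :
    Pn l n = ∑ i ∈ Finset.range n,
      Polynomial.C ((n.choose i : ℝ) * (-1:ℝ)^(n-i-1) * dfall (-l) 1 (n-i))
        * (1 - Polynomial.X)^(n-i-1) * Pn l i := by
  apply (Polynomial.coe_inj).mp
  calc ((Pn l n : Polynomial ℝ) : PowerSeries ℝ)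
      = (((1 - Polynomial.X : Polynomial ℝ)^(n+1) : Polynomial ℝ) : PowerSeries ℝ)
          * PowerSeries.mk (fun j => dfall l ((j:ℝ)+1) n) := (key_prod l n).symm
    _ = (1 - PowerSeries.X : PowerSeries ℝ)^n
          * ((1 - PowerSeries.X) * PowerSeries.mk (fun j => dfall l ((j:ℝ)+1) n)) := by
        rw [Polynomial.coe_pow, coe_one_sub]
        ring
    _ = (1 - PowerSeries.X : PowerSeries ℝ)^n
          * ∑ i ∈ Finset.range n,
            PowerSeries.C ((n.choose i : ℝ) * (-1:ℝ)^(n-i-1) * dfall (-l) 1 (n-i))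
              * PowerSeries.mk (fun j => dfall l ((j:ℝ)+1) i) := by
        rw [step_ps l n hn]
    _ = ∑ i ∈ Finset.range n,
          PowerSeries.C ((n.choose i : ℝ) * (-1:ℝ)^(n-i-1) * dfall (-l) 1 (n-i))
            * ((1 - PowerSeries.X)^(n-i-1)
              * ((1 - PowerSeries.X)^(i+1) * PowerSeries.mk (fun j => dfall l ((j:ℝ)+1) i))) := by
        rw [Finset.mul_sum]
        apply Finset.sum_congr rfl
        intro i hi
        rw [Finset.mem_range] at hi
        rw [show (1 - PowerSeries.X : PowerSeries ℝ)^(n-i-1) * ((1 - PowerSeries.X)^(i+1)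
            * PowerSeries.mk (fun j => dfall l ((j:ℝ)+1) i))
          = ((1 - PowerSeries.X)^(n-i-1) * (1 - PowerSeries.X)^(i+1))
            * PowerSeries.mk (fun j => dfall l ((j:ℝ)+1) i) by ring,
          ← pow_add, show n-i-1 + (i+1) = n by omega]
        ring
    _ = ∑ i ∈ Finset.range n,
          PowerSeries.C ((n.choose i : ℝ) * (-1:ℝ)^(n-i-1) * dfall (-l) 1 (n-i))
            * ((1 - PowerSeries.X)^(n-i-1) * ((Pn l i : Polynomial ℝ) : PowerSeries ℝ)) := by
        apply Finset.sum_congr rfl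
        intro i _
        rw [← coe_one_sub, ← Polynomial.coe_pow, ← Polynomial.coe_pow, key_prod l i]
    _ = (((∑ i ∈ Finset.range n,
          Polynomial.C ((n.choose i : ℝ) * (-1:ℝ)^(n-i-1) * dfall (-l) 1 (n-i))
            * (1 - Polynomial.X)^(n-i-1) * Pn l i : Polynomial ℝ)) : PowerSeries ℝ) := by
        rw [← Polynomial.coeToPowerSeries.ringHom_apply, map_sum]
        apply Finset.sum_congr rfl
        intro i _
        simp only [map_mul, map_pow, Polynomial.coeToPowerSeries.ringHom_apply,
          Polynomial.coe_C, coe_one_sub]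
        ring

theorem stmt4 (l : ℝ) :
    (∀ x : ℝ, degEulerianPoly l 0 x = 1) ∧
    ∀ n : ℕ, 1 ≤ n → ∀ x : ℝ,
      degEulerianPoly l n x =
        ∑ i ∈ Finset.range n,
          (n.choose i : ℝ) * degEulerianPoly l i x * dfall (-l) 1 (n - i) * (x - 1) ^ (n - i - 1) := by
  constructor
  · intro x
    simp [degEulerianPoly, degEulerianNum, dfall]
  · intro n hn x
    have h := congrArg (Polynomial.eval x) (Pn_rec l n hn)
    rw [Pn_eval] at h
    rw [h, Polynomial.eval_finset_sum]
    apply Finset.sum_congr rfl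
    intro i _
    rw [Polynomial.eval_mul, Polynomial.eval_mul, Polynomial.eval_pow, Polynomial.eval_C,
      Polynomial.eval_sub, Polynomial.eval_one, Polynomial.eval_X, Pn_eval]
    have hpow : (x - 1)^(n-i-1) = (-1:ℝ)^(n-i-1) * (1-x)^(n-i-1) := by
      rw [show x - 1 = -(1-x) by ring, neg_pow]
    rw [hpow]
    ring
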